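/- In a binary-conflict-free net, any two finite firing sequences σ and σ' have extensions that are swapping-equivalent: there exist finite words μ, μ' such that σμ and σ'μ' are firing sequences and σμ ≡₀* σ'μ'. (Confluence of firing up to swapping.) -/

import Mathlib

open Relation

/-- A place/transition net with place type `S` and transition type `T`. -/
structure Net (S T : Type) where
  /-- arc weight from place `s` to transition `t` -/
  pre : T → S → ℕ
  /-- arc weight from transition `t` to place `s` -/
  post : T → S → ℕ
  /-- the initial marking -/
  M0 : S → ℕ
  pre_finite : ∀ t, {s | pre t s > 0}.Finite
  pre_nonempty : ∀ t, ∃ s, pre t s > 0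
  post_finite : ∀ t, {s | post t s > 0}.Finite

namespace Net

variable {S T : Type} (N : Net S T)

/-- the singleton step `{t}` is enabled at marking `M` -/
def Enabled (t : T) (M : S → ℕ) : Prop := ∀ s, N.pre t s ≤ M s

/-- the two-element multiset step `{t,u}` is enabled at marking `M` -/
def Enabled2 (t u : T) (M : S → ℕ) : Prop := ∀ s, N.pre t s + N.pre u s ≤ M s

/-- firing transition `t` leads from marking `M` to marking `M'` -/
def Fires (t : T) (M M' : S → ℕ) : Prop :=
  N.Enabled t M ∧ M' = fun s => M s - N.pre t s + N.post t s

/-- firing the finite transition sequence `σ` leads from `M` to `M'` -/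
inductive FiresList : (S → ℕ) → List T → (S → ℕ) → Prop
  | nil (M : S → ℕ) : FiresList M [] M
  | cons {M M₁ M' : S → ℕ} {t : T} {σ : List T} :
      N.Fires t M M₁ → FiresList M₁ σ M' → FiresList M (t :: σ) M'

/-- a marking is reachable -/
def Reachable (M : S → ℕ) : Prop := ∃ σ : List T, N.FiresList N.M0 σ M

/-- `σ` is a finite firing sequence of `N` -/
def FS (σ : List T) : Prop := ∃ M, N.FiresList N.M0 σ M

/-- `σ` is a (possibly infinite) firing sequence of `N` -/
def FSInf (σ : Stream'.Seq T) : Prop := ∀ n, N.FS (σ.take n)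

/-- adjacency `≡₀` on finite firing sequences -/
def Adj (σ ρ : List T) : Prop :=
  ∃ (α β : List T) (t u : T) (M : S → ℕ),
    σ = α ++ t :: u :: β ∧ ρ = α ++ u :: t :: β ∧
    N.FiresList N.M0 α M ∧ N.Enabled2 t u M ∧ N.FS σ ∧ N.FS ρ

/-- adjacency `≡₀` on possibly infinite firing sequences -/
def AdjSeq (σ ρ : Stream'.Seq T) : Prop :=
  ∃ (α : List T) (β : Stream'.Seq T) (t u : T) (M : S → ℕ),
    σ = (Stream'.Seq.ofList (α ++ [t, u])).append β ∧
    ρ = (Stream'.Seq.ofList (α ++ [u, t])).append β ∧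
    N.FiresList N.M0 α M ∧ N.Enabled2 t u M ∧ N.FSInf σ ∧ N.FSInf ρ

end Net

/-- the finite sequence `l` is a prefix of the possibly infinite sequence `s` -/
def ListPrefixSeq {T : Type} (l : List T) (s : Stream'.Seq T) : Prop :=
  s.take l.length = l

namespace Net

variable {S T : Type} (N : Net S T)

/-- the preorder `⊑₀^∞` on possibly infinite firing sequences -/
def Sqsubseteq0 (σ ρ : Stream'.Seq T) : Prop :=
  ∀ σ'' : List T, N.FS σ'' → ListPrefixSeq σ'' σ →
    ∃ σ' ρ' : List T, N.FS σ' ∧ N.FS ρ' ∧ σ'' <+: σ' ∧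
      ReflTransGen N.Adj σ' ρ' ∧ ListPrefixSeq ρ' ρ

end Net

/-- `N` is binary-conflict-free: any two distinct transitions individually
enabled at a reachable marking are enabled together as a step. -/
def Net.BinaryConflictFree {S T : Type} (N : Net S T) : Prop :=
  ∀ M, N.Reachable M → ∀ t u : T, t ≠ u →
    N.Enabled t M → N.Enabled u M → N.Enabled2 t u M

namespace Net

variable {S T : Type} (N : Net S T)

lemma fires_det {t : T} {M M₁ M₂ : S → ℕ} (h1 : N.Fires t M M₁) (h2 : N.Fires t M M₂) :
    M₁ = M₂ := by rw [h1.2, h2.2]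

lemma firesList_det : ∀ {σ : List T} {M M₁ M₂ : S → ℕ},
    N.FiresList M σ M₁ → N.FiresList M σ M₂ → M₁ = M₂ := by
  intro σ
  induction σ with
  | nil => intro M M₁ M₂ h1 h2; cases h1; cases h2; rfl
  | cons t σ ih =>
    intro M M₁ M₂ h1 h2
    cases h1 with
    | cons hf1 hl1 =>
      cases h2 with
      | cons hf2 hl2 =>
        cases N.fires_det hf1 hf2
        exact ih hl1 hl2

lemma firesList_append : ∀ {σ γ : List T} {M M'' : S → ℕ},
    N.FiresList M (σ ++ γ) M'' ↔ ∃ M', N.FiresList M σ M' ∧ N.FiresList M' γ M'' := by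
  intro σ
  induction σ with
  | nil =>
    intro γ M M''
    constructor
    · intro h; exact ⟨M, .nil M, h⟩
    · rintro ⟨M', h1, h2⟩; cases h1; exact h2
  | cons t σ ih =>
    intro γ M M''
    constructor
    · intro h
      cases h with
      | cons hf hl =>
        obtain ⟨M', h1, h2⟩ := ih.1 hl
        exact ⟨M', .cons hf h1, h2⟩
    · rintro ⟨M', h1, h2⟩
      cases h1 with
      | cons hf hl => exact .cons hf (ih.2 ⟨M', hl, h2⟩)

lemma fs_prefix {α β : List T} (h : N.FS (α ++ β)) : N.FS α := by
  obtain ⟨M, hM⟩ := h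
  obtain ⟨M', h1, -⟩ := N.firesList_append.1 hM
  exact ⟨M', h1⟩

lemma swap_step {t u : T} {M M₁ M₂ : S → ℕ} (h2 : N.Enabled2 t u M)
    (hf : N.Fires t M M₁) (hg : N.Fires u M₁ M₂) :
    ∃ M₁', N.Fires u M M₁' ∧ N.Fires t M₁' M₂ := by
  obtain ⟨het, rfl⟩ := hf
  obtain ⟨heu, rfl⟩ := hg
  refine ⟨fun s => M s - N.pre u s + N.post u s,
    ⟨fun s => ?_, rfl⟩, ⟨fun s => ?_, funext fun s => ?_⟩⟩
  · have := h2 s; omega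
  · have := h2 s; show N.pre t s ≤ M s - N.pre u s + N.post u s; omega
  · have := h2 s
    show (M s - N.pre t s + N.post t s) - N.pre u s + N.post u s
        = (M s - N.pre u s + N.post u s) - N.pre t s + N.post t s
    omega

lemma adj_firesList {σ ρ : List T} (h : N.Adj σ ρ) {M : S → ℕ}
    (hσ : N.FiresList N.M0 σ M) : N.FiresList N.M0 ρ M := by
  obtain ⟨α, β, t, u, Mα, rfl, rfl, hα, h2, -, -⟩ := h
  obtain ⟨Mα', hα', hrest⟩ := N.firesList_append.1 hσ
  cases N.firesList_det hα' hα
  cases hrest with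
  | cons hf hrest2 =>
    cases hrest2 with
    | cons hg hβ =>
      obtain ⟨M₁', hu, ht⟩ := N.swap_step h2 hf hg
      exact N.firesList_append.2 ⟨Mα, hα, .cons hu (.cons ht hβ)⟩

lemma adj_symm {σ ρ : List T} (h : N.Adj σ ρ) : N.Adj ρ σ := by
  obtain ⟨α, β, t, u, M, h1, h2, hα, he, hfs, hfs'⟩ := h
  exact ⟨α, β, u, t, M, h2, h1, hα, fun s => by have := he s; omega, hfs', hfs⟩

lemma rtg_symm {σ ρ : List T} (h : ReflTransGen N.Adj σ ρ) : ReflTransGen N.Adj ρ σ :=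
  (@ReflTransGen.symmetric _ _ ⟨fun _ _ hh => N.adj_symm hh⟩).symm _ _ h

lemma adj_of {α β : List T} {t u : T} {M : S → ℕ}
    (hα : N.FiresList N.M0 α M) (h2 : N.Enabled2 t u M)
    (hfs : N.FS (α ++ t :: u :: β)) :
    N.FS (α ++ u :: t :: β) ∧ N.Adj (α ++ t :: u :: β) (α ++ u :: t :: β) := by
  obtain ⟨M'', hM''⟩ := hfs
  obtain ⟨Mα, hα', hrest⟩ := N.firesList_append.1 hM''
  cases N.firesList_det hα' hα
  cases hrest with
  | cons hf hrest2 =>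
    cases hrest2 with
    | cons hg hβ =>
      obtain ⟨M₁', hu, ht⟩ := N.swap_step h2 hf hg
      have hfs2 : N.FS (α ++ u :: t :: β) :=
        ⟨M'', N.firesList_append.2 ⟨M, hα, .cons hu (.cons ht hβ)⟩⟩
      exact ⟨hfs2, α, β, t, u, M, rfl, rfl, hα, h2, ⟨M'', hM''⟩, hfs2⟩

lemma adj_append {σ ρ γ : List T} (h : N.Adj σ ρ) (hfs : N.FS (σ ++ γ)) :
    N.Adj (σ ++ γ) (ρ ++ γ) := by
  obtain ⟨M'', hM''⟩ := hfs
  obtain ⟨Mσ, hσM, hγ⟩ := N.firesList_append.1 hM''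
  have hρ : N.FiresList N.M0 ρ Mσ := N.adj_firesList h hσM
  obtain ⟨α, β, t, u, M, rfl, rfl, hα, he, -, -⟩ := h
  refine ⟨α, β ++ γ, t, u, M, by simp, by simp, hα, he, ?_, ?_⟩
  · exact ⟨M'', by simpa using hM''⟩
  · exact ⟨M'', by simpa using N.firesList_append.2 ⟨Mσ, hρ, hγ⟩⟩

lemma rtg_fs {σ ρ : List T} (h : ReflTransGen N.Adj σ ρ) {M : S → ℕ}
    (hσ : N.FiresList N.M0 σ M) : N.FiresList N.M0 ρ M := by
  induction h with
  | refl => exact hσ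
  | tail _ hbc ih => exact N.adj_firesList hbc ih

lemma rtg_append {σ ρ : List T} (h : ReflTransGen N.Adj σ ρ) (γ : List T)
    (hfs : N.FS (σ ++ γ)) :
    N.FS (ρ ++ γ) ∧ ReflTransGen N.Adj (σ ++ γ) (ρ ++ γ) := by
  induction h with
  | refl => exact ⟨hfs, .refl⟩
  | tail _ hbc ih =>
    obtain ⟨hb, hr⟩ := ih
    have hadj := N.adj_append hbc hb
    obtain ⟨M, hM⟩ := hb
    exact ⟨⟨M, N.adj_firesList hadj hM⟩, hr.tail hadj⟩

lemma keyB (hN : N.BinaryConflictFree) :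
    ∀ (β α : List T) (t : T), N.FS (α ++ [t]) → N.FS (α ++ β) →
    (∃ β₁ β₂ : List T, β = β₁ ++ t :: β₂ ∧ N.FS (α ++ t :: (β₁ ++ β₂)) ∧
        ReflTransGen N.Adj (α ++ β) (α ++ t :: (β₁ ++ β₂)))
    ∨ (N.FS (α ++ β ++ [t]) ∧ ReflTransGen N.Adj (α ++ β ++ [t]) (α ++ t :: β)) := by
  intro β
  induction β with
  | nil =>
    intro α t ht _
    right
    refine ⟨by simpa using ht, ?_⟩
    simp only [List.append_nil]
    exact .refl
  | cons u β ih =>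
    intro α t ht hαuβ
    by_cases hne : t = u
    · subst hne
      left
      refine ⟨[], β, rfl, by simpa using hαuβ, ?_⟩
      simp only [List.nil_append]
      exact .refl
    · -- extract markings
      obtain ⟨M'', hM''⟩ := hαuβ
      obtain ⟨M, hα, hrest⟩ := N.firesList_append.1 hM''
      cases hrest with
      | cons hu hβ =>
        rename_i M₁
        obtain ⟨Mt, hMt⟩ := ht
        obtain ⟨M', hα', htf⟩ := N.firesList_append.1 hMt
        cases N.firesList_det hα' hα
        have het : N.Enabled t M := by cases htf with | cons hf _ => exact hf.1
        have h2 : N.Enabled2 t u M := hN M ⟨α, hα⟩ t u hne het hu.1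
        -- t enabled after firing u
        have hM₁ : M₁ = fun s => M s - N.pre u s + N.post u s := hu.2
        have het1 : N.Enabled t M₁ := by
          rw [hM₁]; intro s; have := h2 s; simp only; omega
        have hαu : N.FiresList N.M0 (α ++ [u]) M₁ :=
          N.firesList_append.2 ⟨M, hα, .cons hu (.nil M₁)⟩
        have ht' : N.FS ((α ++ [u]) ++ [t]) :=
          ⟨_, N.firesList_append.2 ⟨M₁, hαu, .cons ⟨het1, rfl⟩ (.nil _)⟩⟩
        have hβ' : N.FS ((α ++ [u]) ++ β) :=
          ⟨M'', N.firesList_append.2 ⟨M₁, hαu, hβ⟩⟩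
        rcases ih (α ++ [u]) t ht' hβ' with ⟨β₁, β₂, rfl, hfs, hr⟩ | ⟨hfs, hr⟩
        · left
          have h2' : N.Enabled2 u t M := fun s => by have := h2 s; omega
          have hfs' : N.FS (α ++ u :: t :: (β₁ ++ β₂)) := by
            simpa using hfs
          obtain ⟨hfs2, hadj⟩ := N.adj_of hα h2' hfs'
          refine ⟨u :: β₁, β₂, rfl, ?_, ?_⟩
          · simpa using hfs2
          · have hr' : ReflTransGen N.Adj (α ++ u :: (β₁ ++ t :: β₂))
                (α ++ u :: t :: (β₁ ++ β₂)) := by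
              simpa using hr
            have : ReflTransGen N.Adj (α ++ u :: (β₁ ++ t :: β₂))
                (α ++ t :: u :: (β₁ ++ β₂)) := hr'.tail hadj
            simpa using this
        · right
          have hr' : ReflTransGen N.Adj (α ++ (u :: β) ++ [t])
              (α ++ u :: t :: β) := by simpa using hr
          have hfsmid : N.FS (α ++ u :: t :: β) := by
            obtain ⟨Mx, hMx⟩ : N.FS (α ++ (u :: β) ++ [t]) := by simpa using hfs
            exact ⟨Mx, N.rtg_fs hr' hMx⟩
          have h2' : N.Enabled2 u t M := fun s => by have := h2 s; omega
          obtain ⟨hfs2, hadj⟩ := N.adj_of hα h2' hfsmid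
          exact ⟨by simpa using hfs, hr'.tail hadj⟩

end Net

theorem closing_diamond {S T : Type} (N : Net S T)
    (hN : N.BinaryConflictFree) (σ σ' : List T)
    (hσ : N.FS σ) (hσ' : N.FS σ') :
    ∃ μ μ' : List T, N.FS (σ ++ μ) ∧ N.FS (σ' ++ μ') ∧
      Relation.ReflTransGen N.Adj (σ ++ μ) (σ' ++ μ') := by
  induction σ' using List.reverseRecOn with
  | nil =>
    exact ⟨[], σ, by simpa using hσ, by simpa using hσ, by simp only [List.append_nil, List.nil_append]; exact .refl⟩
  | append_singleton ρ t ih =>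
    obtain ⟨μ, μ', hfsσμ, hfsρμ', hrtg⟩ := ih (N.fs_prefix hσ')
    rcases N.keyB hN μ' ρ t hσ' hfsρμ' with ⟨β₁, β₂, rfl, hfs, hr⟩ | ⟨hfs, hr⟩
    · refine ⟨μ, β₁ ++ β₂, hfsσμ, by simpa using hfs, ?_⟩
      have : Relation.ReflTransGen N.Adj (σ ++ μ) (ρ ++ t :: (β₁ ++ β₂)) :=
        hrtg.trans hr
      simpa using this
    · obtain ⟨hfs2, hr2⟩ := N.rtg_append (N.rtg_symm hrtg) [t]
        (by simpa using hfs)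
      refine ⟨μ ++ [t], μ', by simpa using hfs2, ?_, ?_⟩
      · obtain ⟨Mx, hMx⟩ : N.FS (ρ ++ μ' ++ [t]) := hfs
        refine ⟨Mx, ?_⟩
        have := N.rtg_fs hr hMx
        simpa using this
      · have h1 : Relation.ReflTransGen N.Adj ((σ ++ μ) ++ [t]) ((ρ ++ μ') ++ [t]) :=
          N.rtg_symm hr2
        have := h1.trans (by simpa using hr)
        simpa using this
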